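/- Under the same hypotheses, the restriction of φ to M̂ = {ψ₁ − ψ₂ = 1} is bounded from below and satisfies the Palais–Smale condition at every level c ∈ ℝ: every sequence (uₙ) in M̂ with φ(uₙ) → c and ‖(φ|_{M̂})'(uₙ)‖ → 0 admits a convergent subsequence. -/

import Mathlib

open Filter Topology

/-- Weak convergence of a sequence in a normed space, tested against all
continuous linear functionals. -/
def WeakConvSeq {X : Type*} [NormedAddCommGroup X] [NormedSpace ℝ X]
    (u : ℕ → X) (v : X) : Prop :=
  ∀ l : X →L[ℝ] ℝ, Tendsto (fun n => l (u n)) atTop (𝓝 (l v))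

/-- A map `F : X → X'` is of class `(S)₊` if whenever `uₙ ⇀ u` weakly and
`limsup ⟨F(uₙ), uₙ − u⟩ ≤ 0`, then `uₙ → u` strongly. -/
def ClassSPlus {X : Type*} [NormedAddCommGroup X] [NormedSpace ℝ X]
    (F : X → X →L[ℝ] ℝ) : Prop :=
  ∀ (u : ℕ → X) (v : X), WeakConvSeq u v →
    limsup (fun n => F (u n) (u n - v)) atTop ≤ 0 →
    Tendsto u atTop (𝓝 v)

/-- A map is completely continuous if it is continuous and maps bounded
sequences to sequences admitting a (strongly) convergent subsequence. -/
def CompletelyContinuous {X Y : Type*} [NormedAddCommGroup X] [NormedSpace ℝ X]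
    [NormedAddCommGroup Y] (F : X → Y) : Prop :=
  Continuous F ∧ ∀ u : ℕ → X, Bornology.IsBounded (Set.range u) →
    ∃ σ : ℕ → ℕ, StrictMono σ ∧ ∃ y : Y, Tendsto (fun k => F (u (σ k))) atTop (𝓝 y)


set_option linter.unusedSectionVars false
set_option maxHeartbeats 1000000
set_option synthInstance.maxHeartbeats 400000

section Helpers
variable {X : Type*} [NormedAddCommGroup X] [NormedSpace ℝ X]

/-- limsup of an eventually nonpositive real sequence is ≤ 0 (handles junk values). -/
lemma real_limsup_le_zero {f : ℕ → ℝ} (h : ∀ᶠ n in atTop, f n ≤ 0) :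
    limsup f atTop ≤ 0 := by
  rw [Filter.limsup_eq]
  by_cases hb : BddBelow {a : ℝ | ∀ᶠ n in atTop, f n ≤ a}
  · exact csInf_le hb h
  · rw [csInf_of_not_bddBelow hb, Real.sInf_empty]

/-- Mean value theorem along a segment. -/
lemma mvt_seg {F : X → ℝ} (hF : ContDiff ℝ 1 F) (a b : X) :
    ∃ θ ∈ Set.Ioo (0:ℝ) 1, F b - F a = fderiv ℝ F (a + θ • (b - a)) (b - a) := by
  set c : ℝ → X := fun t => a + t • (b - a) with hc
  have hder : ∀ t : ℝ, HasDerivAt (fun t => F (c t)) (fderiv ℝ F (c t) (b - a)) t := by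
    intro t
    have h1 : HasDerivAt c (b - a) t := by
      simpa only [one_smul, id, hc] using ((hasDerivAt_id t).smul_const (b - a)).const_add a
    exact ((hF.differentiable one_ne_zero (c t)).hasFDerivAt).comp_hasDerivAt t h1
  obtain ⟨θ, hθ, hval⟩ := exists_hasDerivAt_eq_slope (fun t => F (c t))
    (fun t => fderiv ℝ F (c t) (b - a)) (by norm_num : (0:ℝ) < 1)
    (fun t _ => (hder t).continuousAt.continuousWithinAt)
    (fun t _ => hder t)
  refine ⟨θ, hθ, ?_⟩
  have : c 1 = b := by simp [hc]
  have h0 : c 0 = a := by simp [hc]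
  rw [hval, this, h0]; ring

/-- Euler identity for positively homogeneous C¹ functions. -/
lemma euler_identity {F : X → ℝ} (hF : ContDiff ℝ 1 F) {α : ℝ}
    (hh : ∀ t : ℝ, 0 < t → ∀ u, F (t • u) = t ^ α * F u) (u : X) :
    fderiv ℝ F u u = α * F u := by
  set c : ℝ → X := fun t => t • u with hc
  have h1 : HasDerivAt (fun t => F (c t)) (fderiv ℝ F (c 1) u) 1 := by
    have hcd : HasDerivAt c u 1 := by simpa using (hasDerivAt_id (1:ℝ)).smul_const u
    exact ((hF.differentiable one_ne_zero (c 1)).hasFDerivAt).comp_hasDerivAt 1 hcd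
  have h2 : HasDerivAt (fun t => F (c t)) (α * F u) 1 := by
    have hr : HasDerivAt (fun t : ℝ => t ^ α * F u) (α * 1 ^ (α - 1) * F u) 1 :=
      (Real.hasDerivAt_rpow_const (Or.inl one_ne_zero)).mul_const (F u)
    have hev : (fun t : ℝ => t ^ α * F u) =ᶠ[𝓝 (1:ℝ)] fun t => F (c t) := by
      filter_upwards [eventually_gt_nhds (by norm_num : (0:ℝ) < 1)] with t ht
      rw [hc]; simp only []
      rw [hh t ht u]
    have := hr.congr_of_eventuallyEq hev.symm
    simpa using this
  have := h1.unique h2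
  simpa [hc] using this

/-- F(0) = 0 for homogeneous F. -/
lemma homog_zero {F : X → ℝ} {α : ℝ} (hα : 0 < α)
    (hh : ∀ t : ℝ, 0 < t → ∀ u, F (t • u) = t ^ α * F u) : F 0 = 0 := by
  have h := hh 2 (by norm_num) 0
  rw [smul_zero] at h
  have h2 : (1:ℝ) < 2 ^ α := (Real.one_lt_rpow_iff_of_pos (by norm_num)).mpr (Or.inl ⟨by norm_num, hα⟩)
  nlinarith [h2]

/-- Extraction of a subsequence with norms tending to infinity from an unbounded sequence. -/
lemma exists_norm_subseq_atTop {u : ℕ → X} (h : ¬ Bornology.IsBounded (Set.range u)) :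
    ∃ σ : ℕ → ℕ, StrictMono σ ∧ ∀ n : ℕ, (n : ℝ) < ‖u (σ n)‖ := by
  have h' : ∀ C : ℝ, ∃ n, C < ‖u n‖ := by
    intro C
    by_contra hC
    push_neg at hC
    exact h (isBounded_iff_forall_norm_le.2 ⟨C, by rintro y ⟨n, rfl⟩; exact hC n⟩)
  apply extraction_forall_of_frequently (P := fun n k => (n:ℝ) < ‖u k‖)
  intro n
  rw [frequently_atTop]
  intro N
  obtain ⟨m, hm⟩ := h' (max (n:ℝ) (Finset.sup' (Finset.range (N+1)) (by simp) (fun k => ‖u k‖)))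
  refine ⟨m, ?_, lt_of_le_of_lt (le_max_left _ _) hm⟩
  by_contra hmN
  push_neg at hmN
  have : ‖u m‖ ≤ Finset.sup' (Finset.range (N+1)) (by simp) (fun k => ‖u k‖) :=
    Finset.le_sup' (fun k => ‖u k‖) (Finset.mem_range.2 (Nat.lt_succ_of_le (le_of_lt hmN)))
  exact absurd (lt_of_le_of_lt (le_max_right _ _) hm) (not_lt.2 this)

end Helpers

section Sep
variable {E : Type*} [NormedAddCommGroup E] [NormedSpace ℝ E]

/-- Separation of a point from a closed submodule by a continuous functional. -/
lemma exists_functional_vanishing {p : Submodule ℝ E} (hc : IsClosed (p : Set E))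
    {x : E} (hx : x ∉ p) :
    ∃ f : E →L[ℝ] ℝ, (∀ y ∈ p, f y = 0) ∧ f x = 1 := by
  obtain ⟨f, c, hfp, hcx⟩ := geometric_hahn_banach_closed_point
    (s := (p : Set E)) (x := x) (p.convex) hc hx
  have hzero : ∀ y ∈ p, f y = 0 := by
    intro y hy
    by_contra hne
    -- scale y to exceed c
    have key : ∀ t : ℝ, t * f y < c := by
      intro t
      have : f (t • y) < c := hfp _ (Submodule.smul_mem p t hy)
      simpa [map_smul, smul_eq_mul] using this
    rcases lt_or_gt_of_ne hne with hneg | hpos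
    · have := key ((c+1) / f y)
      rw [div_mul_cancel₀ _ hne] at this; linarith
    · have := key ((c+1) / f y)
      rw [div_mul_cancel₀ _ hne] at this; linarith
  have h0 : (0:ℝ) < c := by
    have := hfp 0 (Submodule.zero_mem p)
    simpa using this
  have hfx : 0 < f x := lt_trans h0 hcx
  refine ⟨(f x)⁻¹ • f, fun y hy => ?_, ?_⟩
  · simp [hzero y hy]
  · simp [inv_mul_cancel₀ (ne_of_gt hfx)]

/-- A closed submodule of a reflexive space is reflexive (stated concretely). -/
lemma reflexive_closed_submodule {X : Type*} [NormedAddCommGroup X] [NormedSpace ℝ X]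
    (hrefl : Function.Surjective (NormedSpace.inclusionInDoubleDual ℝ X))
    (p : Submodule ℝ X) (hc : IsClosed (p : Set X))
    (Λ : StrongDual ℝ ((@StrongDual ℝ _ _ ↥p _ _ NormedSpace.toModule))) :
    ∃ y : ↥p, ∀ g : ↥p →L[ℝ] ℝ, Λ g = g y := by
  -- the induced element of X**
  let res : (X →L[ℝ] ℝ) →ₗ[ℝ] (↥p →L[ℝ] ℝ) :=
    { toFun := fun f => f.comp p.subtypeL
      map_add' := fun f g => by ext z; simp
      map_smul' := fun a f => by ext z; simp }
  have hres_bound : ∀ f : X →L[ℝ] ℝ, ‖Λ (res f)‖ ≤ ‖Λ‖ * ‖f‖ := by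
    intro f
    have h1 : ‖res f‖ ≤ ‖f‖ := by
      apply ContinuousLinearMap.opNorm_le_bound _ (norm_nonneg f)
      intro z
      simpa [res] using f.le_opNorm (z : X)
    calc ‖Λ (res f)‖ ≤ ‖Λ‖ * ‖res f‖ := Λ.le_opNorm _
    _ ≤ ‖Λ‖ * ‖f‖ := mul_le_mul_of_nonneg_left h1 (norm_nonneg Λ)
  let Λ' : StrongDual ℝ (StrongDual ℝ X) :=
    LinearMap.mkContinuous
      { toFun := fun f => Λ (res f)
        map_add' := fun f g => by simp
        map_smul' := fun a f => by simp }
      ‖Λ‖ (fun f => hres_bound f)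
  obtain ⟨x, hx⟩ := hrefl Λ'
  have hx' : ∀ f : X →L[ℝ] ℝ, Λ' f = f x := by
    intro f
    have := congrArg (fun T => T f) hx
    simpa [NormedSpace.dual_def] using this.symm
  have hxp : x ∈ p := by
    by_contra hxn
    obtain ⟨f, hf0, hf1⟩ := exists_functional_vanishing hc hxn
    have h1 : Λ' f = f x := hx' f
    have h2 : res f = 0 := by
      ext z; simpa [res] using hf0 (z : X) z.2
    have : Λ' f = 0 := by
      show Λ (res f) = 0
      rw [h2, map_zero]
    rw [this] at h1; rw [hf1] at h1; exact one_ne_zero h1.symm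
  refine ⟨⟨x, hxp⟩, fun g => ?_⟩
  obtain ⟨gg, hext, -⟩ := exists_extension_norm_eq p g
  have h2 : res gg = g := by ext z; simpa [res] using hext z
  have : Λ' gg = gg x := hx' gg
  show Λ g = g ⟨x, hxp⟩
  rw [← h2]
  show Λ' gg = (res gg) ⟨x, hxp⟩
  rw [this]
  rfl
end Sep

section WCS
open TopologicalSpace NormedSpace
variable {X : Type*} [NormedAddCommGroup X] [NormedSpace ℝ X]

/-- In a separable reflexive-type closed submodule, the span of suitable dual vectors is dense. -/
lemma exists_dense_dual_seq
    (hrefl : Function.Surjective (NormedSpace.inclusionInDoubleDual ℝ X))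
    (p : Submodule ℝ X) (hc : IsClosed (p : Set X)) [SeparableSpace ↥p] :
    ∃ g : ℕ → (@StrongDual ℝ _ _ ↥p _ _ NormedSpace.toModule), Dense (Submodule.span ℝ (Set.range g) : Set ((@StrongDual ℝ _ _ ↥p _ _ NormedSpace.toModule))) := by
  obtain ⟨y, hy⟩ := TopologicalSpace.exists_dense_seq ↥p
  classical
  have hg : ∀ i : ℕ, ∃ gi : (@StrongDual ℝ _ _ ↥p _ _ NormedSpace.toModule), (y i ≠ 0 → ‖gi‖ = 1 ∧ gi (y i) = ‖y i‖) := by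
    intro i
    by_cases hyi : y i = 0
    · exact ⟨0, fun h => absurd hyi h⟩
    · obtain ⟨gi, h1, h2⟩ := exists_dual_vector ℝ (y i) (norm_ne_zero_iff.2 hyi)
      exact ⟨gi, fun _ => ⟨h1, by exact_mod_cast h2⟩⟩
  choose g hgspec using hg
  refine ⟨g, ?_⟩
  by_contra hnd
  -- a point outside the closure of the span
  have : ∃ h : (@StrongDual ℝ _ _ ↥p _ _ NormedSpace.toModule), h ∉ (Submodule.span ℝ (Set.range g)).topologicalClosure := by
    by_contra hall
    push_neg at hall
    apply hnd
    rw [dense_iff_closure_eq]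
    apply Set.eq_univ_of_forall
    intro h
    exact hall h
  obtain ⟨h, hh⟩ := this
  obtain ⟨Λ, hΛ0, hΛ1⟩ := exists_functional_vanishing
    (Submodule.isClosed_topologicalClosure _) hh
  obtain ⟨z, hz⟩ := reflexive_closed_submodule hrefl p hc Λ
  have hzne : z ≠ 0 := by
    intro hz0
    rw [hz0] at hz
    have := hz h  -- wrong: need Λ h = 1 ≠ h 0 = 0? h 0 = 0 since functional at 0.
    rw [hΛ1] at this
    simp at this
  -- all g i vanish at z
  have hgz : ∀ i, g i z = 0 := by
    intro i
    have : Λ (g i) = 0 := hΛ0 (g i)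
      (Submodule.le_topologicalClosure _ (Submodule.subset_span ⟨i, rfl⟩))
    rw [hz (g i)] at this
    exact this
  -- approximate z by some y i
  have hz4 : 0 < ‖z‖ := norm_pos_iff.2 hzne
  obtain ⟨i, hi⟩ : ∃ i, dist (y i) z < ‖z‖ / 4 := by
    obtain ⟨j, hj⟩ := hy.exists_dist_lt z (by positivity : (0:ℝ) < ‖z‖/4)
    exact ⟨j, by rwa [dist_comm] at hj⟩
  have hyi_norm : ‖z‖ * 3 / 4 ≤ ‖y i‖ := by
    have h1 : ‖z‖ - ‖y i‖ ≤ ‖z - y i‖ := norm_sub_norm_le z (y i)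
    have h2 : ‖z - y i‖ = dist (y i) z := by rw [dist_comm, dist_eq_norm]
    linarith [hi, h1, h2 ▸ h1]
  have hyine : y i ≠ 0 := by
    intro h0
    rw [h0, norm_zero] at hyi_norm
    linarith
  obtain ⟨hn1, hval⟩ := hgspec i hyine
  have hsmall : |g i (y i)| ≤ ‖z‖ / 4 := by
    have : g i (y i) = g i (y i - z) := by rw [map_sub, hgz i]; ring
    rw [this]
    calc |g i (y i - z)| ≤ ‖g i‖ * ‖y i - z‖ := (g i).le_opNorm _
    _ ≤ 1 * (‖z‖/4) := by
        apply mul_le_mul (le_of_eq hn1) _ (norm_nonneg _) zero_le_one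
        rw [← dist_eq_norm]
        exact le_of_lt hi
    _ = ‖z‖/4 := one_mul _
  rw [hval] at hsmall
  rw [abs_of_nonneg (norm_nonneg _)] at hsmall
  linarith
end WCS

section WCS2
open TopologicalSpace NormedSpace

/-- Diagonal extraction: a subsequence along which countably many functionals all converge. -/
lemma diagonal_subseq {E : Type*} [NormedAddCommGroup E] [NormedSpace ℝ E]
    (g : ℕ → E →L[ℝ] ℝ) (x : ℕ → E) {C : ℝ} (hC0 : 0 ≤ C) (hC : ∀ n, ‖x n‖ ≤ C) :
    ∃ σ : ℕ → ℕ, StrictMono σ ∧ ∀ i, ∃ L, Tendsto (fun n => g i (x (σ n))) atTop (𝓝 L) := by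
  set s : Set (ℕ → ℝ) := Set.univ.pi (fun i => Set.Icc (-(‖g i‖ * C)) (‖g i‖ * C)) with hs
  have hcs : IsSeqCompact s :=
    (isCompact_univ_pi (fun i => isCompact_Icc)).isSeqCompact
  have hmem : ∀ n, (fun i => g i (x n)) ∈ s := by
    intro n
    rw [hs, Set.mem_univ_pi]
    intro i
    have h1 : |g i (x n)| ≤ ‖g i‖ * C := by
      calc |g i (x n)| ≤ ‖g i‖ * ‖x n‖ := (g i).le_opNorm _
      _ ≤ ‖g i‖ * C := mul_le_mul_of_nonneg_left (hC n) (norm_nonneg _)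
    exact abs_le.1 h1
  obtain ⟨a, -, σ, hσ, hconv⟩ := hcs hmem
  refine ⟨σ, hσ, fun i => ⟨a i, ?_⟩⟩
  exact (tendsto_pi_nhds.1 hconv) i

variable {X : Type*} [NormedAddCommGroup X] [NormedSpace ℝ X] [CompleteSpace X]

/-- Bounded sequences in a reflexive space admit weakly convergent subsequences. -/
lemma exists_weak_subseq
    (hrefl : Function.Surjective (NormedSpace.inclusionInDoubleDual ℝ X))
    (u : ℕ → X) (hb : Bornology.IsBounded (Set.range u)) :
    ∃ σ : ℕ → ℕ, StrictMono σ ∧ ∃ v : X,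
      ∀ l : X →L[ℝ] ℝ, Tendsto (fun n => l (u (σ n))) atTop (𝓝 (l v)) := by
  obtain ⟨C, hC⟩ := isBounded_iff_forall_norm_le.1 hb
  have hC' : ∀ n, ‖u n‖ ≤ C := fun n => hC _ ⟨n, rfl⟩
  have hC0 : 0 ≤ C := le_trans (norm_nonneg _) (hC' 0)
  set p : Submodule ℝ X := (Submodule.span ℝ (Set.range u)).topologicalClosure with hp
  have hpc : IsClosed (p : Set X) := Submodule.isClosed_topologicalClosure _
  haveI : SeparableSpace ↥p := by
    have h1 : TopologicalSpace.IsSeparable (p : Set X) := by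
      rw [hp, Submodule.topologicalClosure_coe]
      exact ((Set.countable_range u).isSeparable.span).closure
    exact h1.separableSpace
  have hmem : ∀ n, u n ∈ p :=
    fun n => Submodule.le_topologicalClosure _ (Submodule.subset_span ⟨n, rfl⟩)
  set x : ℕ → ↥p := fun n => ⟨u n, hmem n⟩ with hx
  have hxC : ∀ n, ‖x n‖ ≤ C := fun n => hC' n
  obtain ⟨g, hgdense⟩ := exists_dense_dual_seq hrefl p hpc
  obtain ⟨σ, hσ, hgconv⟩ := diagonal_subseq g x hC0 hxC
  -- all functionals converge along σ
  have key : ∀ h : (@StrongDual ℝ _ _ ↥p _ _ NormedSpace.toModule), ∃ L, Tendsto (fun n => h (x (σ n))) atTop (𝓝 L) := by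
    have hspan : ∀ h ∈ Submodule.span ℝ (Set.range g),
        ∃ L, Tendsto (fun n => h (x (σ n))) atTop (𝓝 L) := by
      let M : Submodule ℝ ((@StrongDual ℝ _ _ ↥p _ _ NormedSpace.toModule)) :=
        { carrier := {h | ∃ L, Tendsto (fun n => h (x (σ n))) atTop (𝓝 L)}
          add_mem' := by
            rintro h₁ h₂ ⟨L₁, hL₁⟩ ⟨L₂, hL₂⟩
            exact ⟨L₁ + L₂, by simpa using hL₁.add hL₂⟩
          zero_mem' := ⟨0, by simpa using tendsto_const_nhds⟩
          smul_mem' := by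
            rintro c h ⟨L, hL⟩
            exact ⟨c * L, by simpa using hL.const_mul c⟩ }
      intro h hh
      have : Submodule.span ℝ (Set.range g) ≤ M := by
        rw [Submodule.span_le]
        rintro _ ⟨i, rfl⟩
        exact hgconv i
      exact this hh
    intro h
    -- Cauchy via density
    have hcauchy : CauchySeq (fun n => h (x (σ n))) := by
      rw [Metric.cauchySeq_iff]
      intro ε hε
      have hd : ∃ h' ∈ (Submodule.span ℝ (Set.range g) : Set ((@StrongDual ℝ _ _ ↥p _ _ NormedSpace.toModule))),
          dist h h' < ε / (3 * (C + 1)) := by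
        have := hgdense
        exact Metric.dense_iff.1 this h (ε / (3 * (C + 1))) (by positivity) |>.imp
          (fun h' hh' => ⟨hh'.2, by simpa [dist_comm] using hh'.1⟩)
      obtain ⟨h', hh'mem, hh'close⟩ := hd
      obtain ⟨L', hL'⟩ := hspan h' hh'mem
      obtain ⟨N, hN⟩ := Metric.cauchySeq_iff.1 hL'.cauchySeq (ε/3) (by positivity)
      refine ⟨N, fun m hm n hn => ?_⟩
      have hbnd : ∀ k : ℕ, |h (x (σ k)) - h' (x (σ k))| ≤ ε / 3 := by
        intro k
        have h1 : |(h - h') (x (σ k))| ≤ ‖h - h'‖ * ‖x (σ k)‖ := (h - h').le_opNorm _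
        have h2 : ‖h - h'‖ * ‖x (σ k)‖ ≤ (ε / (3 * (C+1))) * C := by
          apply mul_le_mul _ (hxC _) (norm_nonneg _) (by positivity)
          rw [← dist_eq_norm]
          exact le_of_lt hh'close
        have h3 : (ε / (3 * (C+1))) * C ≤ ε / 3 := by
          rw [div_mul_eq_mul_div, div_le_div_iff₀ (by positivity) (by positivity)]
          nlinarith
        have h4 : (h - h') (x (σ k)) = h (x (σ k)) - h' (x (σ k)) := rfl
        rw [h4] at h1
        linarith
      have h5 := hN m hm n hn
      rw [Real.dist_eq] at h5 ⊢
      have e1 := hbnd m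
      have e2 := hbnd n
      have : h (x (σ m)) - h (x (σ n)) =
        (h (x (σ m)) - h' (x (σ m))) + (h' (x (σ m)) - h' (x (σ n)))
          + (h' (x (σ n)) - h (x (σ n))) := by ring
      rw [this]
      calc |_ + _ + _| ≤ |h (x (σ m)) - h' (x (σ m))| + |h' (x (σ m)) - h' (x (σ n))|
          + |h' (x (σ n)) - h (x (σ n))| := by
            exact (abs_add_le _ _).trans (by gcongr; exact abs_add_le _ _)
      _ < ε := by
          have e2' : |h' (x (σ n)) - h (x (σ n))| ≤ ε/3 := by rw [abs_sub_comm]; exact e2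
          linarith
    exact cauchySeq_tendsto_of_complete hcauchy
  -- the limit functional
  have hlim : ∀ h : (@StrongDual ℝ _ _ ↥p _ _ NormedSpace.toModule), Tendsto (fun n => h (x (σ n))) atTop (𝓝 ((key h).choose)) :=
    fun h => (key h).choose_spec
  set ℓ : (@StrongDual ℝ _ _ ↥p _ _ NormedSpace.toModule) → ℝ := fun h => (key h).choose with hℓ
  have hadd : ∀ h₁ h₂, ℓ (h₁ + h₂) = ℓ h₁ + ℓ h₂ := by
    intro h₁ h₂
    exact tendsto_nhds_unique (hlim (h₁ + h₂)) (by simpa using (hlim h₁).add (hlim h₂))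
  have hsmul : ∀ (c : ℝ) h, ℓ (c • h) = c * ℓ h := by
    intro c h
    exact tendsto_nhds_unique (hlim (c • h)) (by simpa using (hlim h).const_mul c)
  have hbound : ∀ h : (@StrongDual ℝ _ _ ↥p _ _ NormedSpace.toModule), ‖ℓ h‖ ≤ C * ‖h‖ := by
    intro h
    rw [Real.norm_eq_abs]
    have h1 : Tendsto (fun n => |h (x (σ n))|) atTop (𝓝 |ℓ h|) := (hlim h).abs
    apply le_of_tendsto h1
    filter_upwards with n
    calc |h (x (σ n))| ≤ ‖h‖ * ‖x (σ n)‖ := h.le_opNorm _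
    _ ≤ ‖h‖ * C := mul_le_mul_of_nonneg_left (hxC _) (norm_nonneg _)
    _ = C * ‖h‖ := mul_comm _ _
  set Λ : StrongDual ℝ ((@StrongDual ℝ _ _ ↥p _ _ NormedSpace.toModule)) :=
    LinearMap.mkContinuous
      { toFun := ℓ, map_add' := hadd, map_smul' := fun c h => hsmul c h } C hbound with hΛ
  obtain ⟨y, hy⟩ := reflexive_closed_submodule hrefl p hpc Λ
  refine ⟨σ, hσ, (y : X), fun l => ?_⟩
  have h1 : Tendsto (fun n => (l.comp p.subtypeL) (x (σ n))) atTop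
      (𝓝 ((l.comp p.subtypeL) y)) := by
    have h2 : (l.comp p.subtypeL) y = ℓ (l.comp p.subtypeL) := by
      rw [← hy (l.comp p.subtypeL)]; rfl
    rw [h2]
    exact hlim (l.comp p.subtypeL)
  exact h1
end WCS2

section WeakLemmas
variable {X : Type*} [NormedAddCommGroup X] [NormedSpace ℝ X]

lemma WeakConvSeq.subseq {u : ℕ → X} {v : X} (h : WeakConvSeq u v) {σ : ℕ → ℕ}
    (hσ : Tendsto σ atTop atTop) : WeakConvSeq (fun n => u (σ n)) v :=
  fun l => (h l).comp hσ

lemma pairing_diff_tendsto_zero {A : ℕ → X →L[ℝ] ℝ} {z : X →L[ℝ] ℝ}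
    (hA : Tendsto A atTop (𝓝 z)) {d : ℕ → X} {D : ℝ} (hd : ∀ n, ‖d n‖ ≤ D) :
    Tendsto (fun n => (A n - z) (d n)) atTop (𝓝 0) := by
  have hb : ∀ n, ‖(A n - z) (d n)‖ ≤ ‖A n - z‖ * D := by
    intro n
    calc ‖(A n - z) (d n)‖ ≤ ‖A n - z‖ * ‖d n‖ := ContinuousLinearMap.le_opNorm _ _
    _ ≤ ‖A n - z‖ * D := mul_le_mul_of_nonneg_left (hd n) (norm_nonneg _)
  have hg : Tendsto (fun n => ‖A n - z‖ * D) atTop (𝓝 0) := by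
    have h0 : Tendsto (fun n => ‖A n - z‖) atTop (𝓝 0) := by
      rw [← tendsto_zero_iff_norm_tendsto_zero]
      exact tendsto_sub_nhds_zero_iff.2 hA
    simpa using h0.mul_const D
  exact squeeze_zero_norm hb hg

lemma weak_pairing_tendsto_zero {z : X →L[ℝ] ℝ} {w : ℕ → X} {v : X}
    (hw : WeakConvSeq w v) : Tendsto (fun n => z (w n) - z v) atTop (𝓝 0) := by
  simpa using (hw z).sub_const (z v)

/-- A C¹ function with completely continuous derivative is weakly sequentially continuous
on bounded sequences. -/
lemma weak_cont_of_cc {F : X → ℝ} (hF : ContDiff ℝ 1 F)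
    (hFcc : CompletelyContinuous (fun z => fderiv ℝ F z)) {w : ℕ → X} {v : X} {C : ℝ}
    (hbw : ∀ n, ‖w n‖ ≤ C) (hw : WeakConvSeq w v) :
    Tendsto (fun n => F (w n)) atTop (𝓝 (F v)) := by
  have hd : ∀ n, ‖w n - v‖ ≤ C + ‖v‖ :=
    fun n => (norm_sub_le _ _).trans (add_le_add_left (hbw _) _)
  apply tendsto_of_subseq_tendsto
  intro ns hns
  have hmvt : ∀ k : ℕ, ∃ θ ∈ Set.Ioo (0:ℝ) 1,
      F (w (ns k)) - F v = fderiv ℝ F (v + θ • (w (ns k) - v)) (w (ns k) - v) :=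
    fun k => mvt_seg hF v (w (ns k))
  choose θ hθ hFeq using hmvt
  set ξ : ℕ → X := fun k => v + θ k • (w (ns k) - v) with hξ
  have hξb : Bornology.IsBounded (Set.range ξ) := by
    rw [isBounded_iff_forall_norm_le]
    refine ⟨‖v‖ + (C + ‖v‖), ?_⟩
    rintro _ ⟨k, rfl⟩
    have h1 : ‖θ k • (w (ns k) - v)‖ ≤ C + ‖v‖ := by
      rw [norm_smul, Real.norm_eq_abs, abs_of_pos (hθ k).1]
      have h2 : θ k * ‖w (ns k) - v‖ ≤ 1 * ‖w (ns k) - v‖ :=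
        mul_le_mul_of_nonneg_right (le_of_lt (hθ k).2) (norm_nonneg _)
      rw [one_mul] at h2
      exact h2.trans (hd _)
    exact (norm_add_le _ _).trans (add_le_add_right h1 _)
  obtain ⟨ms, hms, z, hz⟩ := hFcc.2 ξ hξb
  refine ⟨ms, ?_⟩
  have heq : ∀ k, F (w (ns (ms k))) =
      F v + ((fderiv ℝ F (ξ (ms k)) - z) (w (ns (ms k)) - v)
        + (z (w (ns (ms k))) - z v)) := by
    intro k
    have h3 : F (w (ns (ms k))) - F v = fderiv ℝ F (ξ (ms k)) (w (ns (ms k)) - v) :=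
      hFeq (ms k)
    have h4 : (fderiv ℝ F (ξ (ms k)) - z) (w (ns (ms k)) - v)
        = fderiv ℝ F (ξ (ms k)) (w (ns (ms k)) - v) - (z (w (ns (ms k))) - z v) := by
      rw [ContinuousLinearMap.sub_apply, z.map_sub]
    rw [h4]
    linarith [h3]
  have h1 : Tendsto (fun k => (fderiv ℝ F (ξ (ms k)) - z) (w (ns (ms k)) - v))
      atTop (𝓝 0) :=
    pairing_diff_tendsto_zero hz (fun k => hd _)
  have h2 : Tendsto (fun k => z (w (ns (ms k))) - z v) atTop (𝓝 0) :=
    weak_pairing_tendsto_zero (hw.subseq (hns.comp hms.tendsto_atTop))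
  have h3 := (h1.add h2).const_add (F v)
  simp only [add_zero] at h3
  exact Tendsto.congr (fun k => (heq k).symm) h3

/-- Pairing of a completely continuous derivative against weak convergence tends to 0. -/
lemma pairing_tendsto_zero {F : X → ℝ}
    (hFcc : CompletelyContinuous (fun z => fderiv ℝ F z)) {w : ℕ → X} {v : X} {C : ℝ}
    (hbw : ∀ n, ‖w n‖ ≤ C) (hw : WeakConvSeq w v) :
    Tendsto (fun n => fderiv ℝ F (w n) (w n - v)) atTop (𝓝 0) := by
  have hd : ∀ n, ‖w n - v‖ ≤ C + ‖v‖ :=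
    fun n => (norm_sub_le _ _).trans (add_le_add_left (hbw _) _)
  apply tendsto_of_subseq_tendsto
  intro ns hns
  have hwb : Bornology.IsBounded (Set.range fun k => w (ns k)) := by
    rw [isBounded_iff_forall_norm_le]
    exact ⟨C, by rintro _ ⟨k, rfl⟩; exact hbw _⟩
  obtain ⟨ms, hms, z, hz⟩ := hFcc.2 _ hwb
  refine ⟨ms, ?_⟩
  have heq : ∀ k, fderiv ℝ F (w (ns (ms k))) (w (ns (ms k)) - v) =
      (fderiv ℝ F (w (ns (ms k))) - z) (w (ns (ms k)) - v)
        + (z (w (ns (ms k))) - z v) := by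
    intro k
    simp only [ContinuousLinearMap.sub_apply, map_sub]
    ring
  have h1 : Tendsto (fun k => (fderiv ℝ F (w (ns (ms k))) - z) (w (ns (ms k)) - v))
      atTop (𝓝 0) := pairing_diff_tendsto_zero hz (fun k => hd _)
  have h2 : Tendsto (fun k => z (w (ns (ms k))) - z v) atTop (𝓝 0) :=
    weak_pairing_tendsto_zero (hw.subseq (hns.comp hms.tendsto_atTop))
  have h3 := h1.add h2
  simp only [add_zero] at h3
  exact Tendsto.congr (fun k => (heq k).symm) h3

/-- Weak sequential lower semicontinuity of `φ + lam • ψ₂` from the (S)₊ property. -/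
lemma weak_lsc {φ ψ₂ : X → ℝ} (hφC : ContDiff ℝ 1 φ) (hψ₂C : ContDiff ℝ 1 ψ₂)
    {lam : ℝ}
    (hSl : ClassSPlus (fun u => fderiv ℝ φ u + lam • fderiv ℝ ψ₂ u))
    {w : ℕ → X} {v : X} {C L : ℝ} (hbw : ∀ n, ‖w n‖ ≤ C) (hw : WeakConvSeq w v)
    (hL : Tendsto (fun n => φ (w n) + lam * ψ₂ (w n)) atTop (𝓝 L)) :
    φ v + lam * ψ₂ v ≤ L := by
  have hd : ∀ n, ‖w n - v‖ ≤ C + ‖v‖ :=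
    fun n => (norm_sub_le _ _).trans (add_le_add_left (hbw _) _)
  set h : X → ℝ := fun z => φ z + lam * ψ₂ z with hdef
  have hC : ContDiff ℝ 1 h := hφC.add (contDiff_const.mul hψ₂C)
  have hderiv : ∀ z, fderiv ℝ h z = fderiv ℝ φ z + lam • fderiv ℝ ψ₂ z := by
    intro z
    have h2 : (fun z => lam * ψ₂ z) = (fun z => lam • ψ₂ z) := by
      funext y; rw [smul_eq_mul]
    have h1 : fderiv ℝ (fun z => lam * ψ₂ z) z = lam • fderiv ℝ ψ₂ z := by
      rw [h2]
      exact fderiv_const_smul (hψ₂C.differentiable one_ne_zero z) lam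
    rw [hdef]
    rw [fderiv_fun_add (g := fun z => lam * ψ₂ z) (hφC.differentiable one_ne_zero z)
      (by rw [h2]; exact ((hψ₂C.differentiable one_ne_zero z).const_smul lam))]
    rw [h1]
  by_contra hlt
  push_neg at hlt
  set δ : ℝ := (h v - L) / 2 with hδ
  have hδpos : 0 < δ := by rw [hδ]; simp only [hdef]; linarith
  have hev : ∀ᶠ n in atTop, h (w n) - h v ≤ -δ := by
    have hev1 : ∀ᶠ n in atTop, h (w n) < L + δ := by
      apply hL.eventually_lt_const
      linarith
    filter_upwards [hev1] with n hn
    have h6 : h v = L + 2 * δ := by rw [hδ]; ring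
    linarith
  have hmvt : ∀ n : ℕ, ∃ θ ∈ Set.Ioo (0:ℝ) 1,
      h (w n) - h v = fderiv ℝ h (v + θ • (w n - v)) (w n - v) :=
    fun n => mvt_seg hC v (w n)
  choose θ hθ hfeq using hmvt
  set ξ : ℕ → X := fun n => v + θ n • (w n - v) with hξ
  have hξw : WeakConvSeq ξ v := by
    intro l
    have hd0 : Tendsto (fun n => l (w n) - l v) atTop (𝓝 0) := by
      simpa using (hw l).sub_const (l v)
    have hsq : Tendsto (fun n => θ n * (l (w n) - l v)) atTop (𝓝 0) := by
      have hbd : ∀ n, ‖θ n * (l (w n) - l v)‖ ≤ ‖l (w n) - l v‖ := by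
        intro n
        rw [Real.norm_eq_abs, Real.norm_eq_abs, abs_mul]
        have h7 : |θ n| ≤ 1 := by
          rw [abs_of_pos (hθ n).1]; exact le_of_lt (hθ n).2
        nlinarith [abs_nonneg (l (w n) - l v), abs_nonneg (θ n)]
      exact squeeze_zero_norm hbd (by simpa using hd0.norm)
    have h8 : (fun n => l (ξ n)) = fun n => l v + θ n * (l (w n) - l v) := by
      funext n
      show l (v + θ n • (w n - v)) = _
      rw [map_add, map_smul, l.map_sub, smul_eq_mul]
    rw [h8]
    simpa using tendsto_const_nhds.add hsq
  have hlimsup : limsup (fun n => (fderiv ℝ φ (ξ n) + lam • fderiv ℝ ψ₂ (ξ n)) (ξ n - v))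
      atTop ≤ 0 := by
    apply real_limsup_le_zero
    filter_upwards [hev] with n hn
    have h1 : ξ n - v = θ n • (w n - v) := by rw [hξ]; simp
    rw [← hderiv (ξ n), h1, map_smul, smul_eq_mul]
    have h3 : fderiv ℝ h (ξ n) (w n - v) = h (w n) - h v := (hfeq n).symm
    rw [h3]
    exact mul_nonpos_of_nonneg_of_nonpos (le_of_lt (hθ n).1) (le_trans hn (by linarith))
  have hstrong : Tendsto ξ atTop (𝓝 v) := hSl ξ v hξw hlimsup
  have hcont : Tendsto (fun n => fderiv ℝ h (ξ n)) atTop (𝓝 (fderiv ℝ h v)) :=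
    ((hC.continuous_fderiv one_ne_zero).tendsto _).comp hstrong
  have hfinal : Tendsto (fun n => h (w n) - h v) atTop (𝓝 0) := by
    have heq : ∀ n, h (w n) - h v =
        (fderiv ℝ h (ξ n) - fderiv ℝ h v) (w n - v)
          + (fderiv ℝ h v (w n) - fderiv ℝ h v v) := by
      intro n
      rw [hfeq n]
      simp only [ContinuousLinearMap.sub_apply, map_sub]
      ring
    have h1 : Tendsto (fun n => (fderiv ℝ h (ξ n) - fderiv ℝ h v) (w n - v)) atTop (𝓝 0) :=
      pairing_diff_tendsto_zero hcont hd
    have h2 : Tendsto (fun n => fderiv ℝ h v (w n) - fderiv ℝ h v v) atTop (𝓝 0) :=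
      weak_pairing_tendsto_zero hw
    have h3 := h1.add h2
    simp only [add_zero] at h3
    exact Tendsto.congr (fun n => (heq n).symm) h3
  have hother : Tendsto (fun n => h (w n) - h v) atTop (𝓝 (L - h v)) := by
    simpa using hL.sub_const (h v)
  have h9 : (0:ℝ) = L - h v := tendsto_nhds_unique hfinal hother
  simp only [hdef] at h9 hlt
  linarith
end WeakLemmas

theorem stmt4 {X : Type*} [NormedAddCommGroup X] [NormedSpace ℝ X] [CompleteSpace X]
    (hrefl : Function.Surjective (NormedSpace.inclusionInDoubleDual ℝ X))
    (φ ψ₁ ψ₂ : X → ℝ) (α : ℝ) (hα : 1 < α)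
    (hφC : ContDiff ℝ 1 φ) (hψ₁C : ContDiff ℝ 1 ψ₁) (hψ₂C : ContDiff ℝ 1 ψ₂)
    (hφe : ∀ u, φ (-u) = φ u) (hψ₁e : ∀ u, ψ₁ (-u) = ψ₁ u) (hψ₂e : ∀ u, ψ₂ (-u) = ψ₂ u)
    (hφh : ∀ t : ℝ, 0 < t → ∀ u, φ (t • u) = t ^ α * φ u)
    (hψ₁h : ∀ t : ℝ, 0 < t → ∀ u, ψ₁ (t • u) = t ^ α * ψ₁ u)
    (hψ₂h : ∀ t : ℝ, 0 < t → ∀ u, ψ₂ (t • u) = t ^ α * ψ₂ u)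
    (hS : ∀ lam : ℝ, 0 < lam →
      ClassSPlus (fun u => fderiv ℝ φ u + lam • fderiv ℝ ψ₂ u))
    (hcc : CompletelyContinuous (fun u => fderiv ℝ ψ₁ u))
    (hpos : ∀ u : X, u ≠ 0 → 0 ≤ ψ₁ u - ψ₂ u → 0 < φ u) :
    BddBelow (φ '' {u : X | ψ₁ u - ψ₂ u = 1}) ∧
    ∀ (c : ℝ) (u : ℕ → X), (∀ n, ψ₁ (u n) - ψ₂ (u n) = 1) →
      Tendsto (fun n => φ (u n)) atTop (𝓝 c) →
      Tendsto (fun n =>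
          ⨅ lam : ℝ, ‖fderiv ℝ φ (u n) - lam • (fderiv ℝ ψ₁ (u n) - fderiv ℝ ψ₂ (u n))‖)
        atTop (𝓝 0) →
      ∃ σ : ℕ → ℕ, StrictMono σ ∧ ∃ v : X, Tendsto (fun k => u (σ k)) atTop (𝓝 v) := by
  have hα0 : (0:ℝ) < α := lt_trans zero_lt_one hα
  have hψ₁0 : ψ₁ 0 = 0 := homog_zero hα0 hψ₁h
  have hψ₂0 : ψ₂ 0 = 0 := homog_zero hα0 hψ₂h
  have hne : ∀ w : X, ψ₁ w - ψ₂ w = 1 → w ≠ 0 := by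
    intro w hw h0
    rw [h0, hψ₁0, hψ₂0] at hw
    norm_num at hw
  have hφpos : ∀ w : X, ψ₁ w - ψ₂ w = 1 → 0 < φ w := by
    intro w hw
    exact hpos w (hne w hw) (by rw [hw]; norm_num)
  constructor
  · refine ⟨0, ?_⟩
    rintro x ⟨w, hw, rfl⟩
    exact (hφpos w hw).le
  intro c u hM hφc hgrad
  -- Euler identities
  have hEφ : ∀ w : X, fderiv ℝ φ w w = α * φ w := euler_identity hφC hφh
  have hEψ₁ : ∀ w : X, fderiv ℝ ψ₁ w w = α * ψ₁ w := euler_identity hψ₁C hψ₁h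
  have hEψ₂ : ∀ w : X, fderiv ℝ ψ₂ w w = α * ψ₂ w := euler_identity hψ₂C hψ₂h
  -- choice of near-optimal multipliers
  have hlamex : ∀ n : ℕ, ∃ lamn : ℝ,
      ‖fderiv ℝ φ (u n) - lamn • (fderiv ℝ ψ₁ (u n) - fderiv ℝ ψ₂ (u n))‖ <
      (⨅ lam : ℝ, ‖fderiv ℝ φ (u n) - lam • (fderiv ℝ ψ₁ (u n) - fderiv ℝ ψ₂ (u n))‖)
        + 1/((n:ℝ)+1) := by
    intro n
    apply exists_lt_of_ciInf_lt
    have : (0:ℝ) < 1/((n:ℝ)+1) := by positivity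
    exact lt_add_of_pos_right _ this
  choose lam hlamlt using hlamex
  set E : ℕ → X →L[ℝ] ℝ :=
    fun n => fderiv ℝ φ (u n) - lam n • (fderiv ℝ ψ₁ (u n) - fderiv ℝ ψ₂ (u n)) with hE
  have hE0 : Tendsto (fun n => ‖E n‖) atTop (𝓝 0) := by
    apply squeeze_zero (fun n => norm_nonneg _) (fun n => (hlamlt n).le)
    have := hgrad.add tendsto_one_div_add_atTop_nhds_zero_nat
    simpa using this
  have hpair : ∀ n, E n (u n) = α * (φ (u n) - lam n) := by
    intro n
    rw [hE]
    simp only [ContinuousLinearMap.sub_apply, ContinuousLinearMap.smul_apply, smul_eq_mul]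
    rw [hEφ, hEψ₁, hEψ₂]
    linear_combination (-(α * lam n)) * hM n
  -- the weak-lsc consequence, used twice
  have hlsc : ∀ (w : ℕ → X) (vv : X) (Cw : ℝ), (∀ k, ‖w k‖ ≤ Cw) → WeakConvSeq w vv →
      ∀ (a b : ℝ), Tendsto (fun k => φ (w k)) atTop (𝓝 a) →
      Tendsto (fun k => ψ₂ (w k)) atTop (𝓝 b) →
      ∀ lamp : ℝ, 0 < lamp → φ vv + lamp * ψ₂ vv ≤ a + lamp * b := by
    intro w vv Cw hbw hwv a b ha hb lamp hl
    exact weak_lsc hφC hψ₂C (hS lamp hl) hbw hwv (ha.add (hb.const_mul lamp))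
  -- from the family of inequalities φ v ≤ lam * G for all lam > 0, conclude
  have hfam : ∀ (vv : X) (G : ℝ), (∀ lamp : ℝ, 0 < lamp → φ vv ≤ lamp * G) →
      0 ≤ G ∧ φ vv ≤ 0 := by
    intro vv G hG
    have hG0 : 0 ≤ G := by
      by_contra hneg
      push_neg at hneg
      have h1 : φ vv ≤ G := by simpa using hG 1 one_pos
      have hlp : 0 < (φ vv - 1) / G := div_pos_of_neg_of_neg (by linarith) hneg
      have h2 := hG _ hlp
      rw [div_mul_cancel₀ _ (ne_of_lt hneg)] at h2
      linarith
    constructor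
    · exact hG0
    rcases eq_or_lt_of_le hG0 with hG0' | hG0'
    · simpa [← hG0'] using hG 1 one_pos
    · by_contra hφp
      push_neg at hφp
      have hlp : 0 < φ vv / (2 * G) := by positivity
      have h2 := hG _ hlp
      rw [div_mul_eq_mul_div, mul_comm] at h2
      have : G * φ vv / (2 * G) = φ vv / 2 := by
        field_simp
      rw [this] at h2
      linarith
  -- Step B : boundedness of the Palais-Smale sequence
  have hbound : Bornology.IsBounded (Set.range u) := by
    by_contra hub
    obtain ⟨σ, hσ, hσn⟩ := exists_norm_subseq_atTop hub
    set t : ℕ → ℝ := fun n => ‖u (σ n)‖ with ht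
    have ht0 : ∀ n, 0 < t n := fun n => lt_of_le_of_lt (Nat.cast_nonneg n) (hσn n)
    set v : ℕ → X := fun n => (t n)⁻¹ • u (σ n) with hv
    have hv1 : ∀ n, ‖v n‖ = 1 := by
      intro n
      rw [hv]
      simp only [norm_smul, norm_inv, Real.norm_eq_abs, abs_of_pos (ht0 n)]
      exact inv_mul_cancel₀ (ne_of_gt (ht0 n))
    have htatTop : Tendsto t atTop atTop :=
      tendsto_atTop_mono (fun n => (hσn n).le) tendsto_natCast_atTop_atTop
    have htinv : Tendsto (fun n => (t n)⁻¹ ^ α) atTop (𝓝 0) := by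
      have h2 : Tendsto (fun n => (t n) ^ α) atTop atTop :=
        (tendsto_rpow_atTop hα0).comp htatTop
      have h3 := h2.inv_tendsto_atTop
      exact Tendsto.congr (fun n => (Real.inv_rpow (ht0 n).le α).symm) h3
    have hφv0 : Tendsto (fun n => φ (v n)) atTop (𝓝 0) := by
      have h1 : ∀ n, φ (v n) = (t n)⁻¹ ^ α * φ (u (σ n)) :=
        fun n => hφh _ (inv_pos.2 (ht0 n)) _
      have h2 : Tendsto (fun n => (t n)⁻¹ ^ α * φ (u (σ n))) atTop (𝓝 (0 * c)) :=
        htinv.mul (hφc.comp hσ.tendsto_atTop)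
      rw [zero_mul] at h2
      exact Tendsto.congr (fun n => (h1 n).symm) h2
    have hgv : ∀ n, ψ₁ (v n) - ψ₂ (v n) = (t n)⁻¹ ^ α := by
      intro n
      rw [hv]
      simp only []
      rw [hψ₁h _ (inv_pos.2 (ht0 n)), hψ₂h _ (inv_pos.2 (ht0 n))]
      rw [← mul_sub, hM (σ n), mul_one]
    have hgv0 : Tendsto (fun n => ψ₁ (v n) - ψ₂ (v n)) atTop (𝓝 0) :=
      Tendsto.congr (fun n => (hgv n).symm) htinv
    have hvb : Bornology.IsBounded (Set.range v) := by
      rw [isBounded_iff_forall_norm_le]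
      exact ⟨1, by rintro _ ⟨n, rfl⟩; exact (hv1 n).le⟩
    obtain ⟨τ, hτ, vv, hwv⟩ := exists_weak_subseq hrefl v hvb
    set w : ℕ → X := fun k => v (τ k) with hw
    have hwv' : WeakConvSeq w vv := hwv
    have hwb : ∀ k, ‖w k‖ ≤ 1 := fun k => (hv1 (τ k)).le
    have hψ₁w : Tendsto (fun k => ψ₁ (w k)) atTop (𝓝 (ψ₁ vv)) :=
      weak_cont_of_cc hψ₁C hcc hwb hwv'
    have hgw : Tendsto (fun k => ψ₁ (w k) - ψ₂ (w k)) atTop (𝓝 0) :=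
      hgv0.comp hτ.tendsto_atTop
    have hψ₂w : Tendsto (fun k => ψ₂ (w k)) atTop (𝓝 (ψ₁ vv)) := by
      have := hψ₁w.sub hgw
      rw [sub_zero] at this
      exact Tendsto.congr (fun k => by ring) this
    have hφw : Tendsto (fun k => φ (w k)) atTop (𝓝 0) := hφv0.comp hτ.tendsto_atTop
    by_cases hv0 : vv = 0
    · -- apply (S)₊ with lam = 1 to contradict ‖w k‖ = 1
      have hψ₂w0 : Tendsto (fun k => ψ₂ (w k)) atTop (𝓝 0) := by
        rw [hv0, hψ₁0] at hψ₂w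
        exact hψ₂w
      have hval : ∀ k, (fderiv ℝ φ (w k) + (1:ℝ) • fderiv ℝ ψ₂ (w k)) (w k - 0)
          = α * φ (w k) + α * ψ₂ (w k) := by
        intro k
        rw [sub_zero]
        simp only [ContinuousLinearMap.add_apply, ContinuousLinearMap.smul_apply,
          one_smul, smul_eq_mul]
        rw [hEφ, hEψ₂]
      have htend : Tendsto (fun k => (fderiv ℝ φ (w k) + (1:ℝ) • fderiv ℝ ψ₂ (w k)) (w k - 0))
          atTop (𝓝 0) := by
        have := (hφw.const_mul α).add (hψ₂w0.const_mul α)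
        simp only [mul_zero, add_zero] at this
        exact Tendsto.congr (fun k => (hval k).symm) this
      have hconv := hS 1 one_pos w 0 (hv0 ▸ hwv') (le_of_eq htend.limsup_eq)
      have hn0 : Tendsto (fun k => ‖w k‖) atTop (𝓝 0) := by
        simpa using hconv.norm
      have hn1 : Tendsto (fun k => ‖w k‖) atTop (𝓝 1) := by
        have heq1 : (fun k => ‖w k‖) = fun _ => (1:ℝ) := funext (fun k => hv1 (τ k))
        rw [heq1]
        exact tendsto_const_nhds
      exact absurd (tendsto_nhds_unique hn0 hn1) (by norm_num)
    · have hkey : ∀ lamp : ℝ, 0 < lamp → φ vv ≤ lamp * (ψ₁ vv - ψ₂ vv) := by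
        intro lamp hl
        have := hlsc w vv 1 hwb hwv' 0 (ψ₁ vv) hφw hψ₂w lamp hl
        nlinarith [this]
      obtain ⟨hG0, hφle⟩ := hfam vv _ hkey
      exact absurd (hpos vv hv0 hG0) (not_lt.2 hφle)
  -- Step M : the main argument
  obtain ⟨Cb, hCb⟩ := isBounded_iff_forall_norm_le.1 hbound
  have hCb' : ∀ n, ‖u n‖ ≤ Cb := fun n => hCb _ ⟨n, rfl⟩
  have hlamc : Tendsto lam atTop (𝓝 c) := by
    have hdiff : Tendsto (fun n => φ (u n) - lam n) atTop (𝓝 0) := by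
      have hbd : ∀ n, ‖φ (u n) - lam n‖ ≤ ‖E n‖ * Cb / α := by
        intro n
        have h1 : |E n (u n)| ≤ ‖E n‖ * Cb := by
          calc |E n (u n)| ≤ ‖E n‖ * ‖u n‖ := (E n).le_opNorm _
          _ ≤ ‖E n‖ * Cb := mul_le_mul_of_nonneg_left (hCb' n) (norm_nonneg _)
        rw [hpair n, abs_mul, abs_of_pos hα0] at h1
        rw [Real.norm_eq_abs, le_div_iff₀ hα0, mul_comm]
        exact h1
      apply squeeze_zero_norm hbd
      have := (hE0.mul_const Cb).div_const α
      simpa using this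
    have h2 := hφc.sub hdiff
    rw [sub_zero] at h2
    exact Tendsto.congr (fun n => by ring) h2
  have hc0 : (0:ℝ) ≤ c := ge_of_tendsto' hφc fun n => (hφpos _ (hM n)).le
  obtain ⟨σ, hσ, vv, hwv⟩ := exists_weak_subseq hrefl u hbound
  set w : ℕ → X := fun k => u (σ k) with hwdef
  have hwv' : WeakConvSeq w vv := hwv
  have hwb : ∀ k, ‖w k‖ ≤ Cb := fun k => hCb' (σ k)
  have hφw : Tendsto (fun k => φ (w k)) atTop (𝓝 c) := hφc.comp hσ.tendsto_atTop
  have hlamw : Tendsto (fun k => lam (σ k)) atTop (𝓝 c) := hlamc.comp hσ.tendsto_atTop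
  have hψ₁w : Tendsto (fun k => ψ₁ (w k)) atTop (𝓝 (ψ₁ vv)) :=
    weak_cont_of_cc hψ₁C hcc hwb hwv'
  have hψ₂w : Tendsto (fun k => ψ₂ (w k)) atTop (𝓝 (ψ₁ vv - 1)) := by
    have h2 := hψ₁w.sub_const 1
    apply Tendsto.congr _ h2
    intro k
    have h3 := hM (σ k)
    linarith
  have hcpos : 0 < c := by
    rcases hc0.lt_or_eq with h | h
    · exact h
    · exfalso
      have hφw0 : Tendsto (fun k => φ (w k)) atTop (𝓝 0) := by rwa [← h] at hφw
      have hkey : ∀ lamp : ℝ, 0 < lamp → φ vv ≤ lamp * (ψ₁ vv - ψ₂ vv - 1) := by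
        intro lamp hl
        have := hlsc w vv Cb hwb hwv' 0 (ψ₁ vv - 1) hφw0 hψ₂w lamp hl
        nlinarith [this]
      obtain ⟨hG0, hφle⟩ := hfam vv _ hkey
      have hgvv : (1:ℝ) ≤ ψ₁ vv - ψ₂ vv := by linarith
      have hvne : vv ≠ 0 := by
        intro h0
        rw [h0, hψ₁0, hψ₂0] at hgvv
        norm_num at hgvv
      exact absurd (hpos vv hvne (by linarith)) (not_lt.2 hφle)
  have hS1 : Tendsto (fun k => fderiv ℝ ψ₁ (w k) (w k - vv)) atTop (𝓝 0) :=
    pairing_tendsto_zero hcc hwb hwv'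
  set T : ℕ → ℝ := fun k => fderiv ℝ ψ₂ (w k) (w k - vv) with hTdef
  have he0 : Tendsto (fun k => E (σ k) (w k - vv)) atTop (𝓝 0) := by
    have hbd : ∀ k, ‖E (σ k) (w k - vv)‖ ≤ ‖E (σ k)‖ * (Cb + ‖vv‖) := by
      intro k
      calc ‖E (σ k) (w k - vv)‖ ≤ ‖E (σ k)‖ * ‖w k - vv‖ := (E (σ k)).le_opNorm _
      _ ≤ ‖E (σ k)‖ * (Cb + ‖vv‖) := by
          apply mul_le_mul_of_nonneg_left _ (norm_nonneg _)
          exact (norm_sub_le _ _).trans (add_le_add_left (hwb _) _)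
    apply squeeze_zero_norm hbd
    have := (hE0.comp hσ.tendsto_atTop).mul_const (Cb + ‖vv‖)
    simpa using this
  have hDecomp : ∀ (lamp : ℝ) (k : ℕ),
      (fderiv ℝ φ (w k) + lamp • fderiv ℝ ψ₂ (w k)) (w k - vv)
      = E (σ k) (w k - vv) + lam (σ k) * fderiv ℝ ψ₁ (w k) (w k - vv)
        + (lamp - lam (σ k)) * T k := by
    intro lamp k
    have hEdef : E (σ k) (w k - vv) = fderiv ℝ φ (w k) (w k - vv)
        - lam (σ k) * (fderiv ℝ ψ₁ (w k) (w k - vv) - fderiv ℝ ψ₂ (w k) (w k - vv)) := by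
      rw [hE]
      simp only [ContinuousLinearMap.sub_apply, ContinuousLinearMap.smul_apply, smul_eq_mul]
      rfl
    simp only [ContinuousLinearMap.add_apply, ContinuousLinearMap.smul_apply, smul_eq_mul,
      hTdef]
    rw [hEdef]
    ring
  have hrest : Tendsto (fun k => E (σ k) (w k - vv)
      + lam (σ k) * fderiv ℝ ψ₁ (w k) (w k - vv)) atTop (𝓝 0) := by
    have h2 := hlamw.mul hS1
    rw [mul_zero] at h2
    simpa using he0.add h2
  suffices hfin : ∃ ρ : ℕ → ℕ, StrictMono ρ ∧ Tendsto (fun j => w (ρ j)) atTop (𝓝 vv) by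
    obtain ⟨ρ, hρ, hcv⟩ := hfin
    exact ⟨fun j => σ (ρ j), hσ.comp hρ, vv, hcv⟩
  by_cases hTb : ∃ M : ℝ, ∃ᶠ k in atTop, |T k| ≤ M
  · obtain ⟨M, hMf⟩ := hTb
    obtain ⟨ρ, hρ, hρT⟩ := extraction_of_frequently_atTop hMf
    refine ⟨ρ, hρ, ?_⟩
    apply hS c hcpos _ vv (hwv'.subseq hρ.tendsto_atTop)
    have hM0 : 0 ≤ M := le_trans (abs_nonneg _) (hρT 0)
    have hD : Tendsto (fun j => (fderiv ℝ φ (w (ρ j)) + c • fderiv ℝ ψ₂ (w (ρ j)))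
        (w (ρ j) - vv)) atTop (𝓝 0) := by
      have h1 : Tendsto (fun j => E (σ (ρ j)) (w (ρ j) - vv)
          + lam (σ (ρ j)) * fderiv ℝ ψ₁ (w (ρ j)) (w (ρ j) - vv)) atTop (𝓝 0) :=
        hrest.comp hρ.tendsto_atTop
      have h3 : Tendsto (fun j => (c - lam (σ (ρ j))) * T (ρ j)) atTop (𝓝 0) := by
        have hbd : ∀ j, ‖(c - lam (σ (ρ j))) * T (ρ j)‖ ≤ |c - lam (σ (ρ j))| * M := by
          intro j
          rw [Real.norm_eq_abs, abs_mul]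
          exact mul_le_mul_of_nonneg_left (hρT j) (abs_nonneg _)
        apply squeeze_zero_norm hbd
        have h4 : Tendsto (fun j => c - lam (σ (ρ j))) atTop (𝓝 0) := by
          have := (hlamw.comp hρ.tendsto_atTop).const_sub c
          simpa using this
        have := h4.abs.mul_const M
        simpa using this
      have := h1.add h3
      rw [add_zero] at this
      apply Tendsto.congr _ this
      intro j
      rw [hDecomp c (ρ j)]
    exact le_of_eq hD.limsup_eq
  · push_neg at hTb
    have hTinf : Tendsto (fun k => |T k|) atTop atTop := by
      rw [tendsto_atTop]
      intro b
      have h5 := hTb b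
      exact h5.mono fun k hk => le_of_lt hk
    by_cases hTpos : ∃ᶠ k in atTop, 0 ≤ T k
    · obtain ⟨ρ, hρ, hρT⟩ := extraction_of_frequently_atTop hTpos
      refine ⟨ρ, hρ, ?_⟩
      apply hS (c/2) (by positivity) _ vv (hwv'.subseq hρ.tendsto_atTop)
      apply real_limsup_le_zero
      have h4 : ∀ᶠ j in atTop, E (σ (ρ j)) (w (ρ j) - vv)
          + lam (σ (ρ j)) * fderiv ℝ ψ₁ (w (ρ j)) (w (ρ j) - vv) ≤ 1 :=
        ((hrest.comp hρ.tendsto_atTop).eventually_lt_const zero_lt_one).mono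
          fun j hj => hj.le
      have h5 : ∀ᶠ j in atTop, 3*c/4 < lam (σ (ρ j)) :=
        (hlamw.comp hρ.tendsto_atTop).eventually_const_lt (by linarith)
      have h6 : ∀ᶠ j in atTop, (4:ℝ)/c ≤ |T (ρ j)| :=
        (hTinf.comp hρ.tendsto_atTop).eventually_ge_atTop (4/c)
      filter_upwards [h4, h5, h6] with j h4 h5 h6
      rw [hDecomp (c/2) (ρ j)]
      have hTj : T (ρ j) = |T (ρ j)| := (abs_of_nonneg (hρT j)).symm
      have hTge : (4:ℝ)/c ≤ T (ρ j) := by rw [hTj]; exact h6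
      have hstep1 : (c/2 - lam (σ (ρ j))) * T (ρ j) ≤ -(c/4) * T (ρ j) := by
        apply mul_le_mul_of_nonneg_right _ (hρT j)
        linarith
      have hstep2 : -(c/4) * T (ρ j) ≤ -1 := by
        have h7 : (c/4) * (4/c) ≤ (c/4) * T (ρ j) :=
          mul_le_mul_of_nonneg_left hTge (by positivity)
        have h8 : (c/4) * (4/c) = 1 := by field_simp
        linarith
      linarith
    · have hTneg : ∀ᶠ k in atTop, T k < 0 := by
        rw [not_frequently] at hTpos
        exact hTpos.mono fun k hk => not_le.1 hk
      refine ⟨fun j => j, strictMono_id, ?_⟩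
      apply hS (2*c) (by positivity) w vv hwv'
      apply real_limsup_le_zero
      have h4 : ∀ᶠ k in atTop, E (σ k) (w k - vv)
          + lam (σ k) * fderiv ℝ ψ₁ (w k) (w k - vv) ≤ 1 :=
        (hrest.eventually_lt_const zero_lt_one).mono fun k hk => hk.le
      have h5 : ∀ᶠ k in atTop, lam (σ k) < 3*c/2 :=
        hlamw.eventually_lt_const (by linarith)
      have h6 : ∀ᶠ k in atTop, (2:ℝ)/c ≤ |T k| := hTinf.eventually_ge_atTop (2/c)
      filter_upwards [h4, h5, h6, hTneg] with k h4 h5 h6 hkneg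
      rw [hDecomp (2*c) k]
      have hTle : T k ≤ -(2/c) := by
        have : |T k| = -T k := abs_of_neg hkneg
        linarith [this ▸ h6]
      have hstep1 : (2*c - lam (σ k)) * T k ≤ (c/2) * T k := by
        apply mul_le_mul_of_nonpos_right _ (le_of_lt hkneg)
        linarith
      have hstep2 : (c/2) * T k ≤ -1 := by
        have h7 : (c/2) * T k ≤ (c/2) * (-(2/c)) :=
          mul_le_mul_of_nonneg_left hTle (by positivity)
        have h8 : (c/2) * (-(2/c)) = -1 := by field_simp
        linarith
      linarith
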